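/- arXiv:0806.2101 — 5 statements merged into one kernel-verified Lean document; each statement's English description precedes it below -/
import Mathlib

section
/- Let R : {±1}^n → D({±1}^m) be a μ-average (q,c,ε)-randomized smooth code. Then there exists a fixed (deterministic) code C : {±1}^n → {±1}^m which is a μ-average (q,c,ε/2)-smooth code for at least εn of the n indices i, i.e., the decoder's μ-average success probability on index i is at least 1/2 + ε/2 for at least εn indices. -/
open Finset
open scoped Classical

/-- A μ-average (q,c,ε)-randomized smooth code `R` (modelled with an
explicit random seed `z ∼ ζ`, decoder success probabilities `succ i y x =
Pr[A^y(i) = x_i]`) can be derandomized: there is a fixed seed `z`, giving the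
deterministic code `C = R(·,z)`, whose μ-average success probability on index `i`
is at least `1/2 + ε/2` for at least `ε·n` of the `n` indices.  The decoder (and
hence its query behaviour: at most `q` queries, each position queried with
probability at most `c/m`) is unchanged. -/
theorem stmt0 (n m : ℕ) (ε : ℝ) (hε : 0 < ε)
    (Z : Type) [Fintype Z] (ζ : Z → ℝ)
    (hζ0 : ∀ z, 0 ≤ ζ z) (hζ1 : ∑ z, ζ z = 1)
    (μ : (Fin n → Bool) → ℝ) (hμ0 : ∀ x, 0 ≤ μ x) (hμ1 : ∑ x, μ x = 1)
    (R : (Fin n → Bool) → Z → (Fin m → Bool))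
    (succ : Fin n → (Fin m → Bool) → (Fin n → Bool) → ℝ)
    (hsucc0 : ∀ i y x, 0 ≤ succ i y x) (hsucc1 : ∀ i y x, succ i y x ≤ 1)
    (hdec : ∀ i, 1/2 + ε ≤ ∑ x, μ x * ∑ z, ζ z * succ i (R x z) x) :
    ∃ z : Z, ε * n ≤
      ((univ.filter fun i : Fin n =>
        1/2 + ε/2 ≤ ∑ x, μ x * succ i (R x z) x).card : ℝ) := by
  have hZ : Nonempty Z := by
    by_contra h
    rw [not_nonempty_iff] at h
    simp [Finset.univ_eq_empty] at hζ1
  rcases Nat.eq_zero_or_pos n with hn | hn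
  · obtain ⟨z⟩ := hZ
    exact ⟨z, by simp [hn]⟩
  -- f z i ≤ 1
  set f : Z → Fin n → ℝ := fun z i => ∑ x, μ x * succ i (R x z) x with hf
  have hf1 : ∀ z i, f z i ≤ 1 := by
    intro z i
    calc f z i ≤ ∑ x, μ x :=
          Finset.sum_le_sum fun x _ => mul_le_of_le_one_right (hμ0 x) (hsucc1 _ _ _)
      _ = 1 := hμ1
  -- ε ≤ 1/2
  have hε2 : ε ≤ 1/2 := by
    have h0 := hdec ⟨0, hn⟩
    have hle : ∑ x, μ x * ∑ z, ζ z * succ ⟨0, hn⟩ (R x z) x ≤ 1 := by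
      calc _ ≤ ∑ x, μ x := by
              refine Finset.sum_le_sum fun x _ => mul_le_of_le_one_right (hμ0 x) ?_
              calc ∑ z, ζ z * succ ⟨0, hn⟩ (R x z) x ≤ ∑ z, ζ z :=
                    Finset.sum_le_sum fun z _ => mul_le_of_le_one_right (hζ0 z) (hsucc1 _ _ _)
                _ = 1 := hζ1
        _ = 1 := hμ1
    linarith
  by_contra hcon
  push_neg at hcon
  -- swap sums: ∑ z, ζ z * f z i = the quantity in hdec
  have hswap : ∀ i, ∑ x, μ x * ∑ z, ζ z * succ i (R x z) x = ∑ z, ζ z * f z i := by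
    intro i
    simp_rw [hf, Finset.mul_sum]
    rw [Finset.sum_comm]
    exact Finset.sum_congr rfl fun z _ => Finset.sum_congr rfl fun x _ => by ring
  -- lower bound on S
  have hlow : (n : ℝ) * (1/2 + ε) ≤ ∑ z, ζ z * ∑ i, f z i := by
    have : ∑ z, ζ z * ∑ i, f z i = ∑ i, ∑ z, ζ z * f z i := by
      simp_rw [Finset.mul_sum]
      exact Finset.sum_comm
    rw [this]
    calc (n : ℝ) * (1/2 + ε) = ∑ _i : Fin n, (1/2 + ε) := by
          simp [Finset.card_univ, mul_comm]
          ring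
      _ ≤ ∑ i, ∑ z, ζ z * f z i :=
          Finset.sum_le_sum fun i _ => (hdec i).trans_eq (hswap i)
  -- upper bound per z
  have hup : ∀ z, ∑ i, f z i ≤ ε * n * (1/2 - ε/2) + n * (1/2 + ε/2) := by
    intro z
    set A := univ.filter fun i : Fin n => 1/2 + ε/2 ≤ f z i with hA
    have hcardA : (A.card : ℝ) ≤ ε * n := (hcon z).le
    have hsplit : ∑ i, f z i = ∑ i ∈ A, f z i + ∑ i ∈ Aᶜ, f z i :=
      (Finset.sum_add_sum_compl A _).symm
    have h1 : ∑ i ∈ A, f z i ≤ A.card := by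
      calc ∑ i ∈ A, f z i ≤ ∑ _i ∈ A, (1 : ℝ) :=
            Finset.sum_le_sum fun i _ => hf1 z i
        _ = A.card := by simp
    have h2 : ∑ i ∈ Aᶜ, f z i ≤ (Aᶜ.card : ℝ) * (1/2 + ε/2) := by
      calc ∑ i ∈ Aᶜ, f z i ≤ ∑ _i ∈ Aᶜ, (1/2 + ε/2) := by
            refine Finset.sum_le_sum fun i hi => ?_
            have : ¬ (1/2 + ε/2 ≤ f z i) := by
              simpa [hA] using Finset.mem_compl.mp hi
            linarith
        _ = (Aᶜ.card : ℝ) * (1/2 + ε/2) := by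
            rw [Finset.sum_const]; push_cast; ring
    have hcards : (A.card : ℝ) + (Aᶜ.card : ℝ) = n := by
      have h := Finset.card_add_card_compl A
      rw [Fintype.card_fin] at h
      exact_mod_cast congrArg (Nat.cast : ℕ → ℝ) h
    nlinarith [hcardA, h1, h2, hcards, hsplit]
  -- combine
  have hS : ∑ z, ζ z * ∑ i, f z i ≤ ε * n * (1/2 - ε/2) + n * (1/2 + ε/2) := by
    calc ∑ z, ζ z * ∑ i, f z i ≤ ∑ z, ζ z * (ε * n * (1/2 - ε/2) + n * (1/2 + ε/2)) :=
          Finset.sum_le_sum fun z _ => mul_le_mul_of_nonneg_left (hup z) (hζ0 z)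
      _ = ε * n * (1/2 - ε/2) + n * (1/2 + ε/2) := by
          rw [← Finset.sum_mul, hζ1, one_mul]
  have hn' : (0 : ℝ) < n := by exact_mod_cast hn
  nlinarith [hlow, hS, mul_pos (mul_pos hε hε) hn']
end

section
/- Let H = ([m], E) be a hypergraph whose hyperedges all have size at most q, and let p : E → [0,1] be weights such that (a) Σ_{e∈E} p(e) > ε, and (b) for every vertex j ∈ [m], Σ_{e∈E : j∈e} p(e) ≤ c/m. Then any maximal set M of pairwise-disjoint hyperedges of H has size |M| > εm/(qc). -/
open Finset
open scoped Classical

/-- The hypergraph matching bound (combinatorial core of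
Katz–Trevisan's Lemma 4).  `E` is a set of hyperedges on vertex set `[m]`, each
of size at most `q` (and nonempty), with weights `p` such that the total weight
exceeds `ε` while the weight through any single vertex is at most `c/m`.  Then
any maximal pairwise-disjoint subfamily `M ⊆ E` has more than `εm/(qc)`
elements. -/
theorem stmt5 (m q : ℕ) (hm : 0 < m) (hq : 0 < q) (ε c : ℝ) (hε : 0 < ε) (hc : 0 < c)
    (E : Finset (Finset (Fin m)))
    (hEne : ∀ e ∈ E, e.Nonempty) (hEq : ∀ e ∈ E, e.card ≤ q)
    (p : Finset (Fin m) → ℝ) (hp0 : ∀ e, 0 ≤ p e)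
    (htot : ε < ∑ e ∈ E, p e)
    (hdeg : ∀ j : Fin m, ∑ e ∈ E.filter (fun e => j ∈ e), p e ≤ c / m)
    (M : Finset (Finset (Fin m))) (hME : M ⊆ E)
    (hdisj : (M : Set (Finset (Fin m))).Pairwise Disjoint)
    (hmax : ∀ e ∈ E, e ∉ M → ∃ r ∈ M, ¬ Disjoint e r) :
    ε * m / (q * c) < (M.card : ℝ) := by
  set T : Finset (Fin m) := M.biUnion id with hT
  -- every e ∈ E meets T
  have hmeet : ∀ e ∈ E, ∃ j ∈ T, j ∈ e := by
    intro e he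
    by_cases heM : e ∈ M
    · obtain ⟨j, hj⟩ := hEne e he
      exact ⟨j, Finset.mem_biUnion.2 ⟨e, heM, hj⟩, hj⟩
    · obtain ⟨r, hrM, hr⟩ := hmax e he heM
      rw [Finset.not_disjoint_iff] at hr
      obtain ⟨j, hje, hjr⟩ := hr
      exact ⟨j, Finset.mem_biUnion.2 ⟨r, hrM, hjr⟩, hje⟩
  have hTcard : T.card ≤ q * M.card := by
    calc T.card ≤ ∑ r ∈ M, (id r).card := Finset.card_biUnion_le
    _ ≤ ∑ r ∈ M, q := Finset.sum_le_sum (fun r hr => hEq r (hME hr))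
    _ = q * M.card := by rw [Finset.sum_const, smul_eq_mul, mul_comm]
  -- double counting
  have h1 : ∑ e ∈ E, p e ≤ ∑ j ∈ T, ∑ e ∈ E.filter (fun e => j ∈ e), p e := by
    have hswap : ∑ j ∈ T, ∑ e ∈ E.filter (fun e => j ∈ e), p e
        = ∑ e ∈ E, ((T.filter (fun j => j ∈ e)).card : ℝ) * p e := by
      simp_rw [Finset.sum_filter]
      rw [Finset.sum_comm]
      refine Finset.sum_congr rfl fun e _ => ?_
      rw [← Finset.sum_filter, Finset.sum_const, nsmul_eq_mul]
    rw [hswap]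
    refine Finset.sum_le_sum (fun e he => ?_)
    have hpos : 0 < (T.filter (fun j => j ∈ e)).card := by
      obtain ⟨j, hjT, hje⟩ := hmeet e he
      exact Finset.card_pos.2 ⟨j, Finset.mem_filter.2 ⟨hjT, hje⟩⟩
    have : (1 : ℝ) ≤ ((T.filter (fun j => j ∈ e)).card : ℝ) := by exact_mod_cast hpos
    nlinarith [hp0 e]
  have h2 : ∑ j ∈ T, ∑ e ∈ E.filter (fun e => j ∈ e), p e ≤ (T.card : ℝ) * (c / m) := by
    calc ∑ j ∈ T, ∑ e ∈ E.filter (fun e => j ∈ e), p e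
        ≤ ∑ j ∈ T, c / m := Finset.sum_le_sum (fun j _ => hdeg j)
    _ = (T.card : ℝ) * (c / m) := by rw [Finset.sum_const, nsmul_eq_mul]
  have hbound : ε < (q : ℝ) * M.card * c / m := by
    have : (T.card : ℝ) ≤ (q : ℝ) * M.card := by exact_mod_cast hTcard
    have hmpos : (0 : ℝ) < m := by exact_mod_cast hm
    calc ε < ∑ e ∈ E, p e := htot
    _ ≤ (T.card : ℝ) * (c / m) := le_trans h1 h2
    _ ≤ (q : ℝ) * M.card * (c / m) := by
        apply mul_le_mul_of_nonneg_right this (by positivity)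
    _ = (q : ℝ) * M.card * c / m := by ring
  have hmpos : (0 : ℝ) < m := by exact_mod_cast hm
  have hqpos : (0 : ℝ) < q := by exact_mod_cast hq
  rw [div_lt_iff₀ (by positivity)]
  rw [lt_div_iff₀ hmpos] at hbound
  nlinarith
end

section
/- Let Q : {±1}^n → D(2^m) be a (q,c,ε)-smooth quantum code with decoder A, and let μ be a distribution on {±1}^n. Then for every i ∈ [n] there exists a family M_i of more than εm/(qc) pairwise-disjoint sets r ⊆ [m], each of size at most q, such that for every r ∈ M_i, Pr_{x∼μ}[A^{Q(x)}(i) = x_i | A(i) queries r] ≥ 1/2 + ε/2. -/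
open Finset
open scoped Classical

/-- Katz–Trevisan matching lemma for smooth quantum codes
(Theorem 4.2 of the paper).  The decoder of a (q,c,ε)-smooth quantum code on
input `i` selects a query set `r` with probability `p i r` (nonempty, of size
at most `q`; each position `j` selected with probability at most `c/m`) and
measures it; `succ i r x ∈ [0,1]` denotes the conditional probability of
outputting `x_i` on state `Q(x)` given query set `r`, and the overall success
probability is at least `1/2 + ε` for every `x` and `i`.  Then for every `i`
there is a family `M` of more than `εm/(qc)` pairwise-disjoint sets of size at
most `q`, each of which predicts `x_i` with μ-average conditional success
probability at least `1/2 + ε/2`. -/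
theorem stmt6 (n m q : ℕ) (hm : 0 < m) (hq : 0 < q) (c ε : ℝ) (hc : 0 < c) (hε : 0 < ε)
    (μ : (Fin n → Bool) → ℝ) (hμ0 : ∀ x, 0 ≤ μ x) (hμ1 : ∑ x, μ x = 1)
    (p : Fin n → Finset (Fin m) → ℝ)
    (hp0 : ∀ i r, 0 ≤ p i r) (hp1 : ∀ i, ∑ r, p i r = 1)
    (hpq : ∀ i r, p i r ≠ 0 → r.card ≤ q ∧ r.Nonempty)
    (hsmooth : ∀ i (j : Fin m), ∑ r ∈ univ.filter (fun r => j ∈ r), p i r ≤ c / m)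
    (succ : Fin n → Finset (Fin m) → (Fin n → Bool) → ℝ)
    (hsucc0 : ∀ i r x, 0 ≤ succ i r x) (hsucc1 : ∀ i r x, succ i r x ≤ 1)
    (hdec : ∀ x i, 1/2 + ε ≤ ∑ r, p i r * succ i r x) :
    ∀ i : Fin n, ∃ M : Finset (Finset (Fin m)),
      ε * m / (q * c) < (M.card : ℝ) ∧
      (∀ r ∈ M, r.card ≤ q) ∧
      (M : Set (Finset (Fin m))).Pairwise Disjoint ∧
      ∀ r ∈ M, 1/2 + ε/2 ≤ ∑ x, μ x * succ i r x := by
  intro i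
  -- success probabilities
  set S : Finset (Fin m) → ℝ := fun r => ∑ x, μ x * succ i r x with hS
  have hS0 : ∀ r, 0 ≤ S r := fun r =>
    Finset.sum_nonneg fun x _ => mul_nonneg (hμ0 x) (hsucc0 i r x)
  have hS1 : ∀ r, S r ≤ 1 := by
    intro r
    calc S r ≤ ∑ x, μ x := Finset.sum_le_sum fun x _ => by
          nlinarith [hμ0 x, hsucc1 i r x, hsucc0 i r x]
      _ = 1 := hμ1
  have hε2 : ε ≤ 1/2 := by
    have h1 : ∑ r, p i r * succ i r (fun _ => false) ≤ ∑ r, p i r :=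
      Finset.sum_le_sum fun r _ => by
        nlinarith [hp0 i r, hsucc1 i r (fun _ => false), hsucc0 i r (fun _ => false)]
    have h2 := hdec (fun _ => false) i
    rw [hp1 i] at h1
    linarith
  -- the good sets
  set Good : Finset (Finset (Fin m)) :=
    univ.filter (fun r => p i r ≠ 0 ∧ 1/2 + ε/2 ≤ S r) with hGoodDef
  have hGoodmem : ∀ r, r ∈ Good ↔ (p i r ≠ 0 ∧ 1/2 + ε/2 ≤ S r) := by
    intro r; simp [hGoodDef]
  -- averaging: total mass of good sets exceeds ε
  have key : 1/2 + ε ≤ ∑ r, p i r * S r := by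
    have hswap : ∑ r, p i r * S r = ∑ x, μ x * ∑ r, p i r * succ i r x := by
      simp only [hS, Finset.mul_sum]
      rw [Finset.sum_comm]
      apply Finset.sum_congr rfl; intro x _
      apply Finset.sum_congr rfl; intro r _
      ring
    rw [hswap]
    calc 1/2 + ε = ∑ x, μ x * (1/2 + ε) := by
          rw [← Finset.sum_mul, hμ1, one_mul]
      _ ≤ _ := Finset.sum_le_sum fun x _ =>
          mul_le_mul_of_nonneg_left (hdec x i) (hμ0 x)
  set Gm : ℝ := ∑ r ∈ Good, p i r with hGm
  have hGm_ε : ε < Gm := by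
    have hsplit : ∑ r ∈ Good, p i r +
        ∑ r ∈ univ.filter (fun r => ¬(p i r ≠ 0 ∧ 1/2 + ε/2 ≤ S r)), p i r = 1 := by
      rw [hGoodDef, Finset.sum_filter_add_sum_filter_not, hp1 i]
    have hsplit2 : ∑ r ∈ Good, p i r * S r +
        ∑ r ∈ univ.filter (fun r => ¬(p i r ≠ 0 ∧ 1/2 + ε/2 ≤ S r)), p i r * S r
        = ∑ r, p i r * S r := by
      rw [hGoodDef, Finset.sum_filter_add_sum_filter_not]
    have h1 : ∑ r ∈ Good, p i r * S r ≤ Gm := by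
      rw [hGm]
      exact Finset.sum_le_sum fun r _ => by nlinarith [hp0 i r, hS1 r, hS0 r]
    have h2 : ∑ r ∈ univ.filter (fun r => ¬(p i r ≠ 0 ∧ 1/2 + ε/2 ≤ S r)), p i r * S r
        ≤ (1/2 + ε/2) * ∑ r ∈ univ.filter (fun r => ¬(p i r ≠ 0 ∧ 1/2 + ε/2 ≤ S r)), p i r := by
      rw [Finset.mul_sum]
      apply Finset.sum_le_sum
      intro r hr
      rw [Finset.mem_filter] at hr
      by_cases h0 : p i r = 0
      · simp [h0]
      · have hlt : S r < 1/2 + ε/2 := by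
          by_contra hge
          exact hr.2 ⟨h0, le_of_not_gt hge⟩
        nlinarith [hp0 i r]
    have hbad0 : 0 ≤ ∑ r ∈ univ.filter (fun r => ¬(p i r ≠ 0 ∧ 1/2 + ε/2 ≤ S r)), p i r :=
      Finset.sum_nonneg fun r _ => hp0 i r
    nlinarith [key, hsplit, hsplit2, h1, h2, hbad0]
  -- maximal disjoint subfamily of Good
  set T : Finset (Finset (Finset (Fin m))) :=
    Good.powerset.filter (fun M => (M : Set (Finset (Fin m))).Pairwise Disjoint) with hT
  have hTne : T.Nonempty := ⟨∅, by simp [hT]⟩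
  obtain ⟨M, hMT, hMmax⟩ := T.exists_max_image Finset.card hTne
  rw [hT, Finset.mem_filter, Finset.mem_powerset] at hMT
  obtain ⟨hMG, hMdisj⟩ := hMT
  -- good sets are nonempty and have card ≤ q
  have hGood_ne : ∀ g ∈ Good, g.Nonempty := by
    intro g hg
    exact (hpq i g ((hGoodmem g).1 hg).1).2
  -- every good set meets some element of M (maximality)
  have hcover : ∀ g ∈ Good, ∃ r ∈ M, ¬ Disjoint g r := by
    intro g hg
    by_contra hcon
    push_neg at hcon
    have hgM : g ∉ M := fun hgm =>
      (Finset.nonempty_iff_ne_empty.1 (hGood_ne g hg))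
        ((Finset.disjoint_self_iff_empty g).1 (hcon g hgm))
    have hins : insert g M ∈ T := by
      rw [hT, Finset.mem_filter, Finset.mem_powerset]
      constructor
      · exact Finset.insert_subset hg hMG
      · rw [Finset.coe_insert]
        rw [Set.pairwise_insert_of_symm]
        exact ⟨hMdisj, fun b hb _ => hcon b hb⟩
    have := hMmax _ hins
    rw [Finset.card_insert_of_notMem hgM] at this
    omega
  -- the union of M
  set J : Finset (Fin m) := M.biUnion id with hJ
  have hJcard : (J.card : ℝ) ≤ (q : ℝ) * M.card := by
    have h1 : J.card ≤ ∑ r ∈ M, r.card := Finset.card_biUnion_le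
    have h2 : ∑ r ∈ M, r.card ≤ ∑ r ∈ M, q :=
      Finset.sum_le_sum fun r hr => (hpq i r ((hGoodmem r).1 (hMG hr)).1).1
    rw [Finset.sum_const, smul_eq_mul] at h2
    have : (J.card : ℝ) ≤ ((M.card * q : ℕ) : ℝ) := by
      exact_mod_cast le_trans h1 h2
    push_cast at this
    linarith
  -- counting: Gm ≤ ∑_{j ∈ J} mass of sets containing j
  have hcount : Gm ≤ ∑ j ∈ J, ∑ r ∈ univ.filter (fun r => j ∈ r), p i r := by
    have step1 : ∀ g ∈ Good, p i g ≤ p i g * ((J ∩ g).card : ℝ) := by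
      intro g hg
      obtain ⟨r, hrM, hrd⟩ := hcover g hg
      obtain ⟨a, hag, har⟩ := Finset.not_disjoint_iff.1 hrd
      have haJ : a ∈ J := Finset.mem_biUnion.2 ⟨r, hrM, har⟩
      have h1 : 0 < (J ∩ g).card := Finset.card_pos.2 ⟨a, Finset.mem_inter.2 ⟨haJ, hag⟩⟩
      have h1' : (1 : ℝ) ≤ ((J ∩ g).card : ℝ) := by exact_mod_cast h1
      nlinarith [hp0 i g]
    have step2 : Gm ≤ ∑ g, p i g * ((J ∩ g).card : ℝ) := by
      rw [hGm]
      calc ∑ g ∈ Good, p i g ≤ ∑ g ∈ Good, p i g * ((J ∩ g).card : ℝ) :=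
            Finset.sum_le_sum step1
        _ ≤ ∑ g, p i g * ((J ∩ g).card : ℝ) :=
            Finset.sum_le_sum_of_subset_of_nonneg (Finset.subset_univ _)
              (fun g _ _ => mul_nonneg (hp0 i g) (Nat.cast_nonneg _))
    have step3 : ∑ g, p i g * ((J ∩ g).card : ℝ)
        = ∑ j ∈ J, ∑ r ∈ univ.filter (fun r => j ∈ r), p i r := by
      have hcard : ∀ g : Finset (Fin m),
          ((J ∩ g).card : ℝ) = ∑ j ∈ J, if j ∈ g then (1 : ℝ) else 0 := by
        intro g
        rw [Finset.sum_boole, Finset.filter_mem_eq_inter]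
      simp_rw [hcard, Finset.mul_sum, mul_ite, mul_one, mul_zero]
      rw [Finset.sum_comm]
      apply Finset.sum_congr rfl
      intro j _
      rw [Finset.sum_filter]
    rw [← step3]; exact step2
  have hmass : Gm ≤ (J.card : ℝ) * (c / m) := by
    calc Gm ≤ ∑ j ∈ J, ∑ r ∈ univ.filter (fun r => j ∈ r), p i r := hcount
      _ ≤ ∑ j ∈ J, c / m := Finset.sum_le_sum fun j _ => hsmooth i j
      _ = (J.card : ℝ) * (c / m) := by rw [Finset.sum_const, nsmul_eq_mul]
  refine ⟨M, ?_, ?_, hMdisj, ?_⟩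
  · have hfin : ε < (q : ℝ) * M.card * (c / m) := by
      calc ε < Gm := hGm_ε
        _ ≤ (J.card : ℝ) * (c / m) := hmass
        _ ≤ (q : ℝ) * M.card * (c / m) :=
            mul_le_mul_of_nonneg_right hJcard (div_nonneg hc.le (Nat.cast_nonneg _))
    have hm' : (0 : ℝ) < m := by exact_mod_cast hm
    have hq' : (0 : ℝ) < q := by exact_mod_cast hq
    rw [div_lt_iff₀ (by positivity : (0:ℝ) < (q : ℝ) * c)]
    have h2 : ε * m < (q : ℝ) * M.card * (c / m) * m :=
      mul_lt_mul_of_pos_right hfin hm'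
    have h3 : (q : ℝ) * M.card * (c / m) * m = (M.card : ℝ) * ((q : ℝ) * c) := by
      field_simp
    linarith
  · intro r hr
    exact (hpq i r ((hGoodmem r).1 (hMG hr)).1).1
  · intro r hr
    exact ((hGoodmem r).1 (hMG hr)).2
end

section
/- Let C : {±1}^n → {±1}^m be a code with a decoder A such that for every x and i, Pr[A^{C(x)}(i) = x_i] ≥ 1/2 + ε, and suppose for each i there is a family M'_i of exactly m/q pairwise-disjoint q-subsets of [m] partitioning [m], of which a subfamily M_i with |M_i| ≥ εm/(qc) consists of sets r with conditional success probability ≥ 1/2 + ε/2 under μ. Consider the decoder B that on input i picks r uniformly from M'_i, outputs the decoder's prediction if r ∈ M_i, and outputs a uniformly random ±1 bit otherwise. Then B queries each index j ∈ [m] with probability exactly q/m, and its μ-average success probability on each index i is at least 1/2 + ε²/(2c). -/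
open Finset
open scoped Classical

/-- From a matching to a perfectly smooth decoder.  For each `i`,
`M' i` is a partition of `[m]` into exactly `m/q` disjoint sets of size `q`,
and `M i ⊆ M' i` is a subfamily of at least `εm/(qc)` sets whose conditional
μ-average success probability `∑ x, μ x * succ i r x` is at least `1/2 + ε/2`.
The decoder `B` picks `r` uniformly from `M' i`, uses the original decoder if
`r ∈ M i`, and outputs a fair coin flip otherwise.  Then `B` queries each index
`j` with probability exactly `q/m`, and its μ-average success probability on
each index `i` is at least `1/2 + ε²/(2c)`. -/
theorem stmt15 (n m q : ℕ) (hq : 0 < q) (hm : 0 < m) (hqm : q ∣ m)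
    (c ε : ℝ) (hc : 0 < c) (hε : 0 < ε)
    (μ : (Fin n → Bool) → ℝ) (hμ0 : ∀ x, 0 ≤ μ x) (hμ1 : ∑ x, μ x = 1)
    (M' M : Fin n → Finset (Finset (Fin m)))
    (hpartcard : ∀ i, (M' i).card = m / q)
    (hsize : ∀ i, ∀ r ∈ M' i, r.card = q)
    (hdisj : ∀ i, ((M' i : Set (Finset (Fin m)))).Pairwise Disjoint)
    (hcover : ∀ i, ∀ j : Fin m, ∃ r ∈ M' i, j ∈ r)
    (hsub : ∀ i, M i ⊆ M' i)
    (hMcard : ∀ i, ε * m / (q * c) ≤ ((M i).card : ℝ))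
    (succ : Fin n → Finset (Fin m) → (Fin n → Bool) → ℝ)
    (hsucc0 : ∀ i r x, 0 ≤ succ i r x) (hsucc1 : ∀ i r x, succ i r x ≤ 1)
    (hgood : ∀ i, ∀ r ∈ M i, 1/2 + ε/2 ≤ ∑ x, μ x * succ i r x) :
    (∀ i (j : Fin m),
      (((M' i).filter (fun r => j ∈ r)).card : ℝ) / ((M' i).card : ℝ)
        = (q : ℝ) / m) ∧
    (∀ i, 1/2 + ε^2 / (2*c) ≤
      ∑ x, μ x * ((1 / ((M' i).card : ℝ)) *
        ∑ r ∈ M' i, (if r ∈ M i then succ i r x else 1/2))) := by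
  have hNposℕ : ∀ i, 0 < (M' i).card := by
    intro i; rw [hpartcard]; exact Nat.div_pos (Nat.le_of_dvd hm hqm) hq
  have hNR : ∀ i, ((M' i).card : ℝ) = (m : ℝ) / q := by
    intro i; rw [hpartcard]; exact Nat.cast_div hqm (by positivity)
  constructor
  · intro i j
    have huniq : ((M' i).filter (fun r => j ∈ r)).card = 1 := by
      rw [Finset.card_eq_one]
      obtain ⟨r, hr, hjr⟩ := hcover i j
      refine ⟨r, Finset.ext fun s => ?_⟩
      simp only [Finset.mem_filter, Finset.mem_singleton]
      constructor
      · rintro ⟨hs, hjs⟩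
        by_contra hne
        exact Finset.disjoint_left.mp (hdisj i hs hr hne) hjs hjr |>.elim
      · rintro rfl; exact ⟨hr, hjr⟩
    rw [huniq, hNR i]
    have hm' : (m : ℝ) ≠ 0 := by positivity
    have hq' : (q : ℝ) ≠ 0 := by positivity
    field_simp; norm_num
  · intro i
    set N : ℝ := ((M' i).card : ℝ) with hNdef
    have hN0 : 0 < N := by rw [hNdef]; exact_mod_cast hNposℕ i
    have hKle : (M i).card ≤ (M' i).card := Finset.card_le_card (hsub i)
    set K : ℝ := ((M i).card : ℝ) with hKdef
    -- swap sums
    have hswap : ∑ x, μ x * ((1 / N) *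
        ∑ r ∈ M' i, (if r ∈ M i then succ i r x else 1/2))
        = (1 / N) * ∑ r ∈ M' i,
            ∑ x, μ x * (if r ∈ M i then succ i r x else 1/2) := by
      simp_rw [Finset.mul_sum, mul_left_comm]
      exact Finset.sum_comm
    rw [hswap]
    -- bound the inner sum
    have hsplit : ∑ r ∈ M' i, ∑ x, μ x * (if r ∈ M i then succ i r x else 1/2)
        = (∑ r ∈ M' i \ M i, ∑ x, μ x * (1/2 : ℝ))
          + ∑ r ∈ M i, ∑ x, μ x * succ i r x := by
      rw [← Finset.sum_sdiff (hsub i)]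
      congr 1
      · exact Finset.sum_congr rfl fun r hr => by
          have : r ∉ M i := (Finset.mem_sdiff.mp hr).2
          simp [this]
      · exact Finset.sum_congr rfl fun r hr => by simp [hr]
    have hhalf : ∑ x, μ x * (1/2 : ℝ) = 1/2 := by
      rw [← Finset.sum_mul, hμ1, one_mul]
    have hbound : N / 2 + K * (ε / 2)
        ≤ ∑ r ∈ M' i, ∑ x, μ x * (if r ∈ M i then succ i r x else 1/2) := by
      rw [hsplit]
      have h1 : ∑ r ∈ M' i \ M i, ∑ x, μ x * (1/2 : ℝ) = (N - K) * (1/2) := by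
        rw [Finset.sum_congr rfl fun r _ => hhalf, Finset.sum_const,
          Finset.card_sdiff_of_subset (hsub i), nsmul_eq_mul, Nat.cast_sub hKle]
      have h2 : K * (1/2 + ε/2) ≤ ∑ r ∈ M i, ∑ x, μ x * succ i r x := by
        calc K * (1/2 + ε/2) = ∑ _r ∈ M i, (1/2 + ε/2) := by
              rw [Finset.sum_const, nsmul_eq_mul]
          _ ≤ _ := Finset.sum_le_sum fun r hr => hgood i r hr
      have hKN : K ≤ N := by rw [hKdef, hNdef]; exact_mod_cast hKle
      nlinarith [h2]
    have hKlow : ε * m / (q * c) ≤ K := hMcard i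
    have hfin : 1/2 + ε^2 / (2*c) ≤ (1/N) * (N / 2 + K * (ε / 2)) := by
      rw [hNdef, hNR i]
      have hm' : (0:ℝ) < m := by exact_mod_cast hm
      have hq' : (0:ℝ) < q := by exact_mod_cast hq
      have key : ε^2 / (2*c) ≤ K * ε * q / (2 * m) := by
        rw [div_le_div_iff₀ (by positivity) (by positivity)]
        have : ε * m / (q * c) * (ε * q * c) ≤ K * (ε * q * c) := by
          apply mul_le_mul_of_nonneg_right hKlow (by positivity)
        calc ε^2 * (2*m) = ε * m / (q * c) * (ε * q * c) * 2 := by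
              field_simp
          _ ≤ K * (ε * q * c) * 2 := by linarith
          _ = K * ε * q * (2 * c) := by ring
      have expand : (1:ℝ)/((m:ℝ)/q) * ((m:ℝ)/q/2 + K*(ε/2))
          = 1/2 + K * ε * q / (2 * m) := by
        field_simp
      rw [expand]
      linarith [key]
    calc 1/2 + ε^2/(2*c) ≤ (1/N) * (N/2 + K*(ε/2)) := hfin
      _ ≤ _ := by
          apply mul_le_mul_of_nonneg_left hbound (by positivity)
end

section
/- Let C : {±1}^n → {±1}^m be a (q,c,ε)-smooth code (worst-case over all x). Then there exists a decoder B such that: (1) for every x ∈ {±1}^n and every i ∈ [n], Pr[B^{C(x)}(i) = x_i] ≥ 1/2 + ε²/(2c); and (2) for every i and j ∈ [m], B(i) queries index j with probability exactly q/m. That is, C is a (q,q,ε²/(2c))-smooth code with perfectly uniform queries. -/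
set_option maxHeartbeats 1000000


open Finset
open scoped Classical

lemma realize_marginals (m q : ℕ) (hq : 0 < q) (hqm : q ≤ m) (t : Fin m → ℝ)
    (h0 : ∀ j, 0 ≤ t j) (h1 : ∀ j, t j ≤ 1) (hsum : ∑ j, t j = q) :
    ∃ w : Finset (Fin m) → ℝ, (∀ r, 0 ≤ w r) ∧ (∑ r, w r = 1) ∧
      (∀ r, w r ≠ 0 → r.card = q) ∧
      (∀ j, ∑ r ∈ univ.filter (fun r => j ∈ r), w r = t j) := by
  by_cases hqem : q = m
  · subst hqem
    have ht1 : ∀ j, t j = 1 := by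
      have hz : ∑ j, (1 - t j) = 0 := by
        rw [Finset.sum_sub_distrib, hsum]; simp
      intro j
      have := (Finset.sum_eq_zero_iff_of_nonneg (fun j _ => by linarith [h1 j])).1 hz j (mem_univ j)
      linarith
    refine ⟨fun r => if r = univ then 1 else 0, fun r => by positivity, by simp, ?_, ?_⟩
    · intro r hr
      have : r = univ := by by_contra h; simp [h] at hr
      subst this; simp
    · intro j
      rw [Finset.sum_ite_eq' (univ.filter (fun r => j ∈ r)) univ (fun _ => (1:ℝ))]
      simp [ht1 j]
  · have hqm' : q < m := lt_of_le_of_ne hqm hqem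
    have hmq : (0:ℝ) < (m:ℝ) - q := by
      have : (q:ℝ) < m := by exact_mod_cast hqm'
      linarith
    -- the index set of the first q rows
    set Kq : Finset (Fin m) := univ.filter (fun k : Fin m => (k : ℕ) < q) with hKq
    have hKqcard : Kq.card = q := by
      have : Kq = Finset.Iio (⟨q, hqm'⟩ : Fin m) := by
        ext k; simp [hKq, Fin.lt_def]
      rw [this, Fin.card_Iio]
    -- the doubly stochastic matrix
    set M : Matrix (Fin m) (Fin m) ℝ :=
      fun k j => if k ∈ Kq then t j / q else (1 - t j) / ((m:ℝ) - q) with hMdef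
    have hM : M ∈ doublyStochastic ℝ (Fin m) := by
      rw [mem_doublyStochastic_iff_sum]
      refine ⟨fun k j => ?_, fun k => ?_, fun j => ?_⟩
      · by_cases hk : k ∈ Kq <;>
          simp only [hMdef, hk, if_true, if_false] <;>
          [skip; skip] <;>
          first
            | exact div_nonneg (h0 j) (by positivity)
            | exact div_nonneg (by linarith [h1 j]) hmq.le
      · by_cases hk : k ∈ Kq <;> simp only [hMdef, hk, if_true, if_false]
        · rw [← Finset.sum_div, hsum]
          field_simp
        · rw [← Finset.sum_div]
          rw [Finset.sum_sub_distrib, hsum]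
          simp only [Finset.sum_const, Finset.card_univ, Fintype.card_fin, nsmul_eq_mul, mul_one]
          field_simp
      · rw [← Finset.sum_add_sum_compl Kq (fun k => M k j)]
        have e1 : ∑ k ∈ Kq, M k j = q * (t j / q) := by
          have : ∑ k ∈ Kq, M k j = ∑ _k ∈ Kq, t j / q :=
            Finset.sum_congr rfl fun k hk => by simp only [hMdef, if_pos hk]
          rw [this, Finset.sum_const, hKqcard, nsmul_eq_mul]
        have e2 : ∑ k ∈ Kqᶜ, M k j = ((m:ℝ) - q) * ((1 - t j) / ((m:ℝ) - q)) := by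
          have : ∑ k ∈ Kqᶜ, M k j = ∑ _k ∈ Kqᶜ, (1 - t j) / ((m:ℝ) - q) :=
            Finset.sum_congr rfl fun k hk => by
              simp only [hMdef, if_neg (Finset.mem_compl.1 hk)]
          rw [this, Finset.sum_const, Finset.card_compl, hKqcard, Fintype.card_fin, nsmul_eq_mul]
          congr 1
          push_cast [Nat.cast_sub hqm]
          ring
        rw [e1, e2]
        have hq0 : (q:ℝ) ≠ 0 := by positivity
        field_simp
        ring
    obtain ⟨lam, hlam0, hlam1, hlamM⟩ := exists_eq_sum_perm_of_mem_doublyStochastic hM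
    have hpoint : ∀ k j, ∑ σ : Equiv.Perm (Fin m),
        lam σ * (if σ k = j then (1:ℝ) else 0) = M k j := by
      intro k j
      rw [← hlamM, Matrix.sum_apply]
      refine Finset.sum_congr rfl fun σ _ => ?_
      simp [Equiv.Perm.permMatrix, PEquiv.toMatrix_apply, Equiv.toPEquiv_apply, mul_ite]
    -- the image sets
    set Rs : Equiv.Perm (Fin m) → Finset (Fin m) := fun σ => Kq.image σ with hRs
    have hRscard : ∀ σ, (Rs σ).card = q := by
      intro σ
      rw [hRs]
      rw [Finset.card_image_of_injective _ σ.injective, hKqcard]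
    have hmemRs : ∀ σ (j : Fin m), j ∈ Rs σ ↔ σ.symm j ∈ Kq := by
      intro σ j
      simp only [hRs, Finset.mem_image]
      constructor
      · rintro ⟨k, hk, rfl⟩; simpa using hk
      · intro h; exact ⟨σ.symm j, h, by simp⟩
    refine ⟨fun r => ∑ σ ∈ univ.filter (fun σ => Rs σ = r), lam σ,
      fun r => Finset.sum_nonneg fun σ _ => hlam0 σ, ?_, ?_, ?_⟩
    · rw [Finset.sum_fiberwise_of_maps_to (fun σ _ => Finset.mem_univ (Rs σ)), hlam1]
    · intro r hr
      obtain ⟨σ, hσ⟩ : ∃ σ, σ ∈ univ.filter (fun σ => Rs σ = r) := by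
        by_contra h
        push_neg at h
        exact hr (Finset.sum_eq_zero fun σ hσ => absurd hσ (h σ))
      rw [Finset.mem_filter] at hσ
      rw [← hσ.2, hRscard]
    · intro j
      have step1 : ∑ r ∈ univ.filter (fun r => j ∈ r), ∑ σ ∈ univ.filter (fun σ => Rs σ = r), lam σ
          = ∑ σ : Equiv.Perm (Fin m), (if j ∈ Rs σ then lam σ else 0) := by
        rw [Finset.sum_congr rfl (fun r _ => Finset.sum_filter (fun σ => Rs σ = r) lam)]
        rw [Finset.sum_comm]
        refine Finset.sum_congr rfl fun σ _ => ?_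
        rw [Finset.sum_ite_eq (univ.filter (fun r => j ∈ r)) (Rs σ) (fun _ => lam σ)]
        simp
      rw [step1]
      have step2 : ∀ σ : Equiv.Perm (Fin m),
          (if j ∈ Rs σ then lam σ else 0)
          = ∑ k ∈ Kq, lam σ * (if σ k = j then (1:ℝ) else 0) := by
        intro σ
        have e : ∀ k ∈ Kq, lam σ * (if σ k = j then (1:ℝ) else 0)
            = (if k = σ.symm j then lam σ else 0) := by
          intro k _
          by_cases h : σ k = j
          · rw [if_pos h, if_pos (by rw [Equiv.eq_symm_apply]; exact h), mul_one]
          · rw [if_neg h, if_neg (fun hk => h (by rw [hk]; simp)), mul_zero]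
        rw [Finset.sum_congr rfl e, Finset.sum_ite_eq' Kq (σ.symm j) (fun _ => lam σ)]
        by_cases hj : j ∈ Rs σ
        · rw [if_pos hj, if_pos ((hmemRs σ j).1 hj)]
        · rw [if_neg hj, if_neg (fun h => hj ((hmemRs σ j).2 h))]
      rw [Finset.sum_congr rfl (fun σ _ => step2 σ)]
      rw [Finset.sum_comm]
      have step3 : ∀ k ∈ Kq, (∑ σ : Equiv.Perm (Fin m), lam σ * (if σ k = j then (1:ℝ) else 0))
          = t j / q := by
        intro k hk
        rw [hpoint k j]
        simp only [hMdef, if_pos hk]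
      rw [Finset.sum_congr rfl step3, Finset.sum_const, hKqcard, nsmul_eq_mul]
      have hq0 : (q:ℝ) ≠ 0 := by positivity
      field_simp

/-- A (q,c,ε)-smooth code is a (q,q,ε²/(2c))-smooth code with
perfectly uniform queries (worst-case over all `x`), the key step towards
private information retrieval.  A decoder is modelled by: a distribution
`p i` over query sets `r` (of size at most `q`, each position queried with
probability at most `c/m`), and output probabilities `out i r y b =
Pr[output = b]` depending only on the bits of the oracle `y` inside `r`;
success means `∑ r, p i r * out i r (C x) (x i) ≥ 1/2 + ε` for every `x, i`.
The conclusion asserts a new decoder `(p', out')` with query sets of size at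
most `q`, each position queried with probability exactly `q/m`, and worst-case
success probability at least `1/2 + ε²/(2c)`. -/
theorem stmt17 (n m q : ℕ) (hq : 0 < q) (hm : 0 < m) (hqm : q ∣ m)
    (c ε : ℝ) (hc : 0 < c) (hε : 0 < ε)
    (C : (Fin n → Bool) → (Fin m → Bool))
    (p : Fin n → Finset (Fin m) → ℝ)
    (hp0 : ∀ i r, 0 ≤ p i r) (hp1 : ∀ i, ∑ r, p i r = 1)
    (hpq : ∀ i r, p i r ≠ 0 → r.card ≤ q)
    (hsmooth : ∀ i (j : Fin m), ∑ r ∈ univ.filter (fun r => j ∈ r), p i r ≤ c / m)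
    (out : Fin n → Finset (Fin m) → (Fin m → Bool) → Bool → ℝ)
    (hout0 : ∀ i r y b, 0 ≤ out i r y b)
    (houtsum : ∀ i r y, out i r y true + out i r y false = 1)
    (hloc : ∀ i r, ∀ y y' : Fin m → Bool, (∀ j ∈ r, y j = y' j) → out i r y = out i r y')
    (hsucc : ∀ x (i : Fin n), 1/2 + ε ≤ ∑ r, p i r * out i r (C x) (x i)) :
    ∃ (p' : Fin n → Finset (Fin m) → ℝ)
      (out' : Fin n → Finset (Fin m) → (Fin m → Bool) → Bool → ℝ),
      (∀ i r, 0 ≤ p' i r) ∧ (∀ i, ∑ r, p' i r = 1) ∧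
      (∀ i r, p' i r ≠ 0 → r.card ≤ q) ∧
      (∀ i (j : Fin m), ∑ r ∈ univ.filter (fun r => j ∈ r), p' i r = (q : ℝ) / m) ∧
      (∀ i r y b, 0 ≤ out' i r y b) ∧
      (∀ i r y, out' i r y true + out' i r y false = 1) ∧
      (∀ i r, ∀ y y' : Fin m → Bool, (∀ j ∈ r, y j = y' j) → out' i r y = out' i r y') ∧
      (∀ x (i : Fin n), 1/2 + ε^2 / (2*c) ≤ ∑ r, p' i r * out' i r (C x) (x i)) := by
  classical
  have hqm' : q ≤ m := Nat.le_of_dvd hm hqm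
  have hm0 : (0:ℝ) < m := by exact_mod_cast hm
  have hq0 : (0:ℝ) < q := by exact_mod_cast hq
  have hqm0 : (q:ℝ) ≤ m := by exact_mod_cast hqm'
  have hout1 : ∀ i r y b, out i r y b ≤ 1 := by
    intro i r y b
    have h := houtsum i r y
    cases b
    · linarith [hout0 i r y true]
    · linarith [hout0 i r y false]
  -- key bounds on ε derived from the existence of a decodable index i
  have hkey : ∀ _i : Fin n, ε ≤ 1/2 ∧ 2*ε ≤ c := by
    intro i
    set x : Fin n → Bool := fun _ => true with hx
    set x' : Fin n → Bool := Function.update x i false with hx'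
    have h1 := hsucc x i
    have h2 := hsucc x' i
    have hxi : x i = true := rfl
    have hx'i : x' i = false := Function.update_self i false x
    rw [hxi] at h1
    rw [hx'i] at h2
    have hsum1 : ∑ r, p i r * out i r (C x) true ≤ 1 := by
      calc ∑ r, p i r * out i r (C x) true
          ≤ ∑ r, p i r * 1 :=
            Finset.sum_le_sum fun r _ =>
              mul_le_mul_of_nonneg_left (hout1 i r (C x) true) (hp0 i r)
        _ = 1 := by simp [hp1 i]
    have hεhalf : ε ≤ 1/2 := by linarith
    refine ⟨hεhalf, ?_⟩
    have eA : ∑ r, p i r * out i r (C x) true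
        = 1 - ∑ r, p i r * out i r (C x) false := by
      rw [eq_sub_iff_add_eq, ← Finset.sum_add_distrib, ← hp1 i]
      exact Finset.sum_congr rfl fun r _ => by
        rw [← mul_add, houtsum i r (C x), mul_one]
    have key : 2*ε ≤ ∑ r, p i r * (out i r (C x') false - out i r (C x) false) := by
      have : ∑ r, p i r * (out i r (C x') false - out i r (C x) false)
          = ∑ r, p i r * out i r (C x') false - ∑ r, p i r * out i r (C x) false := by
        rw [← Finset.sum_sub_distrib]
        exact Finset.sum_congr rfl fun r _ => by ring
      rw [this]
      rw [eA] at h1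
      linarith
    set D : Finset (Fin m) := univ.filter (fun j => ¬ (C x j = C x' j)) with hD
    have hbound : ∀ r : Finset (Fin m),
        p i r * (out i r (C x') false - out i r (C x) false)
        ≤ ∑ j ∈ D, (if j ∈ r then p i r else 0) := by
      intro r
      by_cases hagree : ∀ j ∈ r, C x j = C x' j
      · rw [hloc i r (C x) (C x') hagree]
        simp only [sub_self, mul_zero]
        exact Finset.sum_nonneg fun j _ => by
          split
          · exact hp0 i r
          · exact le_refl 0
      · push_neg at hagree
        obtain ⟨j0, hj0r, hj0⟩ := hagree
        have hj0D : j0 ∈ D := Finset.mem_filter.2 ⟨mem_univ _, hj0⟩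
        have hstep : p i r * (out i r (C x') false - out i r (C x) false) ≤ p i r := by
          have : out i r (C x') false - out i r (C x) false ≤ 1 := by
            linarith [hout1 i r (C x') false, hout0 i r (C x) false]
          calc p i r * (out i r (C x') false - out i r (C x) false)
              ≤ p i r * 1 := mul_le_mul_of_nonneg_left this (hp0 i r)
            _ = p i r := mul_one _
        refine hstep.trans ?_
        have h5 : (if j0 ∈ r then p i r else 0) ≤ ∑ j ∈ D, (if j ∈ r then p i r else 0) :=
          Finset.single_le_sum (f := fun j => (if j ∈ r then p i r else 0))
            (fun j _ => by split; exacts [hp0 i r, le_refl 0]) hj0D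
        rwa [if_pos hj0r] at h5
    have hswap : ∑ r, ∑ j ∈ D, (if j ∈ r then p i r else 0)
        = ∑ j ∈ D, ∑ r ∈ univ.filter (fun r => j ∈ r), p i r := by
      rw [Finset.sum_comm]
      exact Finset.sum_congr rfl fun j _ => (Finset.sum_filter _ _).symm
    have hfinal : ∑ j ∈ D, ∑ r ∈ univ.filter (fun r => j ∈ r), p i r ≤ c := by
      calc ∑ j ∈ D, ∑ r ∈ univ.filter (fun r => j ∈ r), p i r
          ≤ ∑ _j ∈ D, c/m := Finset.sum_le_sum fun j _ => hsmooth i j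
        _ = (D.card : ℝ) * (c/m) := by rw [Finset.sum_const, nsmul_eq_mul]
        _ ≤ (m:ℝ) * (c/m) := by
            have hcard : (D.card : ℝ) ≤ m := by
              have : D.card ≤ m := by
                calc D.card ≤ (univ : Finset (Fin m)).card := Finset.card_le_card (Finset.filter_subset _ _)
                  _ = m := by simp
              exact_mod_cast this
            exact mul_le_mul_of_nonneg_right hcard (by positivity)
        _ = c := by field_simp
    calc 2*ε ≤ ∑ r, p i r * (out i r (C x') false - out i r (C x) false) := key
      _ ≤ ∑ r, ∑ j ∈ D, (if j ∈ r then p i r else 0) := Finset.sum_le_sum fun r _ => hbound r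
      _ = ∑ j ∈ D, ∑ r ∈ univ.filter (fun r => j ∈ r), p i r := hswap
      _ ≤ c := hfinal
  -- the padding marginal profile
  have hcardlt : ∀ (s : Finset (Fin m)) (j : Fin m), j ∉ s → (s.card:ℝ) < m := by
    intro s j hj
    have : s.card < m := by
      have h1 : s ⊆ univ.erase j := fun k hk =>
        Finset.mem_erase.2 ⟨fun h => hj (h ▸ hk), mem_univ k⟩
      calc s.card ≤ (univ.erase j).card := Finset.card_le_card h1
        _ = m - 1 := by rw [Finset.card_erase_of_mem (mem_univ j), card_univ, Fintype.card_fin]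
        _ < m := Nat.sub_lt hm one_pos
    exact_mod_cast this
  set e : Finset (Fin m) → Fin m → ℝ :=
    fun s j => if j ∈ s then (1:ℝ) else ((q:ℝ) - s.card)/((m:ℝ) - s.card) with hedef
  have he : ∀ s : Finset (Fin m), s.card ≤ q →
      (∀ j, 0 ≤ e s j) ∧ (∀ j, e s j ≤ 1) ∧ ∑ j, e s j = (q:ℝ) := by
    intro s hs
    have hsq : ((s.card:ℝ)) ≤ q := by exact_mod_cast hs
    refine ⟨?_, ?_, ?_⟩
    · intro j
      by_cases hj : j ∈ s
      · simp [hedef, hj]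
      · simp only [hedef]
        simp only [if_neg hj]
        have := hcardlt s j hj
        apply div_nonneg <;> linarith
    · intro j
      by_cases hj : j ∈ s
      · simp [hedef, hj]
      · simp only [hedef]
        simp only [if_neg hj]
        have := hcardlt s j hj
        rw [div_le_one (by linarith)]
        linarith
    · by_cases hu : s = univ
      · have hcard : s.card = m := by rw [hu, card_univ, Fintype.card_fin]
        have hqem : (q:ℝ) = m := by
          have : m ≤ q := by rw [← hcard]; exact hs
          have : q = m := le_antisymm hqm' this
          exact_mod_cast this
        have : ∀ j, e s j = 1 := by
          intro j
          have : j ∈ s := by rw [hu]; exact mem_univ j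
          simp [hedef, this]
        rw [Finset.sum_congr rfl (fun j _ => this j)]
        rw [Finset.sum_const, card_univ, Fintype.card_fin, nsmul_eq_mul, mul_one, hqem]
      · have hlt : s.card < m := by
          have h1 : s ⊂ univ := Finset.ssubset_univ_iff.2 hu
          have := Finset.card_lt_card h1
          simpa using this
        have hltR : (s.card:ℝ) < m := by exact_mod_cast hlt
        rw [← Finset.sum_add_sum_compl s (e s)]
        have e1 : ∑ j ∈ s, e s j = (s.card : ℝ) := by
          have : ∀ j ∈ s, e s j = 1 := fun j hj => by simp [hedef, hj]
          rw [Finset.sum_congr rfl this, Finset.sum_const, nsmul_eq_mul, mul_one]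
        have e2 : ∑ j ∈ sᶜ, e s j = (q:ℝ) - s.card := by
          have : ∀ j ∈ sᶜ, e s j = ((q:ℝ) - s.card)/((m:ℝ) - s.card) := fun j hj => by
            simp only [hedef]
            simp only [if_neg (Finset.mem_compl.1 hj)]
          rw [Finset.sum_congr rfl this, Finset.sum_const, nsmul_eq_mul]
          rw [Finset.card_compl, Fintype.card_fin]
          rw [Nat.cast_sub hlt.le]
          have hpos : (0:ℝ) < (m:ℝ) - s.card := by linarith
          push_cast
          rw [mul_comm, div_mul_cancel₀ _ (ne_of_gt hpos)]
        rw [e1, e2]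
        ring
  -- choice of padding distributions
  have hW : ∀ s : Finset (Fin m), ∃ w : Finset (Fin m) → ℝ,
      (∀ r, 0 ≤ w r) ∧ (∑ r, w r = 1) ∧ (∀ r, w r ≠ 0 → r.card = q) ∧
      (s.card ≤ q → ∀ j, ∑ r ∈ univ.filter (fun r => j ∈ r), w r = e s j) := by
    intro s
    by_cases hs : s.card ≤ q
    · obtain ⟨hw0, hw1, hw2⟩ := he s hs
      obtain ⟨w, h0, h1, h2, h3⟩ := realize_marginals m q hq hqm' (e s) hw0 hw1 hw2
      exact ⟨w, h0, h1, h2, fun _ => h3⟩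
    · obtain ⟨r₀, _, hr₀⟩ := Finset.exists_subset_card_eq (show q ≤ (univ : Finset (Fin m)).card by
        rw [card_univ, Fintype.card_fin]; exact hqm')
      refine ⟨fun r => if r = r₀ then 1 else 0, fun r => by positivity, by simp, ?_, ?_⟩
      · intro r hr
        have : r = r₀ := by by_contra h; simp [h] at hr
        rw [this, hr₀]
      · intro h; exact absurd h hs
  choose w hw0 hw1 hwcard hwmarg using hW
  have hwsub : ∀ s r, s.card ≤ q → w s r ≠ 0 → s ⊆ r := by
    intro s r hs hne j hjs
    by_contra hjr
    have h1 : ∑ r' ∈ univ.filter (fun r' => j ∈ r'), w s r' = 1 := by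
      rw [hwmarg s hs j, hedef]
      simp [hjs]
    have h2 := Finset.sum_filter_add_sum_filter_not univ (fun r' => j ∈ r') (w s)
    rw [hw1 s] at h2
    have h3 : ∑ r' ∈ univ.filter (fun r' => j ∉ r'), w s r' = 0 := by linarith
    have h4 := (Finset.sum_eq_zero_iff_of_nonneg (fun r' _ => hw0 s r')).1 h3 r
      (Finset.mem_filter.2 ⟨mem_univ r, hjr⟩)
    exact hne h4
  -- the mixing parameter
  set β : ℝ := ε/(2*c) with hβ
  have hβpos : 0 < β := by positivity
  have hβ14 : ∀ _i : Fin n, β ≤ 1/4 := by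
    intro i
    obtain ⟨_, hεc⟩ := hkey i
    rw [hβ, div_le_iff₀ (by positivity)]
    linarith
  set S' : Fin n → Fin m → ℝ := fun i j => ∑ s, p i s * e s j with hS'
  set t' : Fin n → Fin m → ℝ := fun i j => ((q:ℝ)/m - β * S' i j)/(1-β) with ht'
  have hS0 : ∀ i j, 0 ≤ S' i j := by
    intro i j
    apply Finset.sum_nonneg
    intro s _
    by_cases hps : p i s = 0
    · simp [hps]
    · exact mul_nonneg (hp0 i s) ((he s (hpq i s hps)).1 j)
  have hSle : ∀ i j, S' i j ≤ (c + q)/m := by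
    intro i j
    have split : S' i j = ∑ s ∈ univ.filter (fun s => j ∈ s), p i s * e s j
        + ∑ s ∈ univ.filter (fun s => j ∉ s), p i s * e s j :=
      (Finset.sum_filter_add_sum_filter_not univ _ _).symm
    have b1 : ∑ s ∈ univ.filter (fun s => j ∈ s), p i s * e s j ≤ c/m := by
      have h : ∀ s ∈ univ.filter (fun s => j ∈ s), p i s * e s j = p i s := by
        intro s hs
        simp only [hedef]
        simp only [if_pos (Finset.mem_filter.1 hs).2, mul_one]
      rw [Finset.sum_congr rfl h]
      exact hsmooth i j
    have b2 : ∑ s ∈ univ.filter (fun s => j ∉ s), p i s * e s j ≤ q/m := by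
      have h : ∀ s ∈ univ.filter (fun s => j ∉ s), p i s * e s j ≤ p i s * ((q:ℝ)/m) := by
        intro s hs
        have hjs : j ∉ s := (Finset.mem_filter.1 hs).2
        by_cases hps : p i s = 0
        · simp [hps]
        · apply mul_le_mul_of_nonneg_left _ (hp0 i s)
          simp only [hedef]
          simp only [if_neg hjs]
          have hkm := hcardlt s j hjs
          have hkq : ((s.card:ℝ)) ≤ q := by exact_mod_cast hpq i s hps
          rw [div_le_div_iff₀ (by linarith) hm0]
          have hk0 : (0:ℝ) ≤ s.card := by positivity
          nlinarith
      calc ∑ s ∈ univ.filter (fun s => j ∉ s), p i s * e s j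
          ≤ ∑ s ∈ univ.filter (fun s => j ∉ s), p i s * ((q:ℝ)/m) := Finset.sum_le_sum h
        _ ≤ ∑ s, p i s * ((q:ℝ)/m) := Finset.sum_le_sum_of_subset_of_nonneg
            (Finset.filter_subset _ _) (fun s _ _ => mul_nonneg (hp0 i s) (by positivity))
        _ = (q:ℝ)/m := by rw [← Finset.sum_mul, hp1 i, one_mul]
    have hdd : (c+(q:ℝ))/(m:ℝ) = c/m + (q:ℝ)/m := by ring
    rw [split, hdd]
    linarith
  have hSsum : ∀ i, ∑ j, S' i j = q := by
    intro i
    simp only [hS']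
    rw [Finset.sum_comm]
    have h : ∀ s : Finset (Fin m), ∑ j, p i s * e s j = p i s * q := by
      intro s
      rw [← Finset.mul_sum]
      by_cases hps : p i s = 0
      · simp [hps]
      · rw [(he s (hpq i s hps)).2.2]
    rw [Finset.sum_congr rfl (fun s _ => h s), ← Finset.sum_mul, hp1 i, one_mul]
  -- the correcting distribution
  have hQ : ∀ i : Fin n, ∃ Qw : Finset (Fin m) → ℝ,
      (∀ r, 0 ≤ Qw r) ∧ (∑ r, Qw r = 1) ∧ (∀ r, Qw r ≠ 0 → r.card = q) ∧
      (∀ j, ∑ r ∈ univ.filter (fun r => j ∈ r), Qw r = t' i j) := by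
    intro i
    obtain ⟨hεhalf, hεc⟩ := hkey i
    have hβ4 := hβ14 i
    have h1β : (0:ℝ) < 1 - β := by linarith
    have ht0 : ∀ j, 0 ≤ t' i j := by
      intro j
      apply div_nonneg _ h1β.le
      have h1 : β * S' i j ≤ β * ((c+q)/m) :=
        mul_le_mul_of_nonneg_left (hSle i j) hβpos.le
      have h2 : β * ((c+q)/m) ≤ (q:ℝ)/m := by
        rw [hβ]
        rw [div_mul_div_comm, div_le_div_iff₀ (by positivity) hm0]
        have hq1 : (1:ℝ) ≤ q := by exact_mod_cast hq
        have e1 : ε*q ≤ (c/2)*q := mul_le_mul_of_nonneg_right (by linarith) hq0.le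
        have e2 : ε*c ≤ (1/2)*c := mul_le_mul_of_nonneg_right (by linarith) hc.le
        have e3 : (1/2)*c ≤ (q/2)*c := mul_le_mul_of_nonneg_right (by linarith) hc.le
        have key2 : ε*(c+q) ≤ 2*c*q := by nlinarith [e1, e2, e3]
        nlinarith [mul_le_mul_of_nonneg_right key2 hm0.le]
      linarith
    have ht1 : ∀ j, t' i j ≤ 1 := by
      intro j
      simp only [ht']
      rw [div_le_one h1β]
      by_cases hmeq : m = q
      · have hSj : S' i j = 1 := by
          have h : ∀ s : Finset (Fin m), p i s * e s j = p i s := by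
            intro s
            by_cases hps : p i s = 0
            · simp [hps]
            · have hcq : ((s.card:ℝ)) ≤ q := by exact_mod_cast hpq i s hps
              simp only [hedef]
              by_cases hj : j ∈ s
              · rw [if_pos hj, mul_one]
              · rw [if_neg hj]
                have hltm := hcardlt s j hj
                have hmq : (m:ℝ) = q := by exact_mod_cast hmeq
                rw [← hmq, div_self (by linarith), mul_one]
          simp only [hS']
          rw [Finset.sum_congr rfl (fun s _ => h s), hp1 i]
        have hq1 : (q:ℝ)/m = 1 := by
          have hmq : (m:ℝ) = q := by exact_mod_cast hmeq
          rw [hmq, div_self (ne_of_gt hq0)]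
        rw [hSj, hq1]
        linarith
      · have h2q : 2*q ≤ m := by
          obtain ⟨k, hk⟩ := hqm
          have hk2 : 2 ≤ k := by
            rcases Nat.lt_or_ge k 2 with hk' | hk'
            · interval_cases k <;> omega
            · exact hk'
          have := Nat.mul_le_mul_left q hk2
          omega
        have hhalf : (q:ℝ)/m ≤ 1/2 := by
          rw [div_le_div_iff₀ hm0 (by norm_num)]
          have : ((2*q:ℕ):ℝ) ≤ m := by exact_mod_cast h2q
          push_cast at this
          linarith
        have hβS : 0 ≤ β * S' i j := mul_nonneg hβpos.le (hS0 i j)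
        linarith
    have htsum : ∑ j, t' i j = q := by
      simp only [ht']
      rw [← Finset.sum_div, Finset.sum_sub_distrib, ← Finset.mul_sum, hSsum i]
      rw [Finset.sum_const, card_univ, Fintype.card_fin, nsmul_eq_mul]
      rw [div_eq_iff (ne_of_gt h1β)]
      field_simp
    exact realize_marginals m q hq hqm' (t' i) ht0 ht1 htsum
  choose Qw hQ0 hQ1 hQcard hQmarg using hQ
  -- the new decoder
  set P1 : Fin n → Finset (Fin m) → ℝ := fun i r => ∑ s, p i s * w s r with hP1
  set p' : Fin n → Finset (Fin m) → ℝ :=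
    fun i r => β * P1 i r + (1-β) * Qw i r with hp'def
  set N : Fin n → Finset (Fin m) → (Fin m → Bool) → Bool → ℝ :=
    fun i r y b => β * (∑ s, p i s * w s r * out i s y b) + (1-β) * Qw i r * (1/2) with hNdef
  set out' : Fin n → Finset (Fin m) → (Fin m → Bool) → Bool → ℝ :=
    fun i r y b => if p' i r = 0 then (1/2:ℝ) else N i r y b / p' i r with hout'def
  have h1β : ∀ _i : Fin n, (0:ℝ) < 1 - β := fun i => by linarith [hβ14 i]
  have hP10 : ∀ i r, 0 ≤ P1 i r :=
    fun i r => Finset.sum_nonneg fun s _ => mul_nonneg (hp0 i s) (hw0 s r)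
  have hp'0 : ∀ i r, 0 ≤ p' i r := by
    intro i r
    simp only [hp'def]
    exact add_nonneg (mul_nonneg hβpos.le (hP10 i r)) (mul_nonneg (h1β i).le (hQ0 i r))
  have hN0 : ∀ i r y b, 0 ≤ N i r y b := by
    intro i r y b
    apply add_nonneg
    · exact mul_nonneg hβpos.le (Finset.sum_nonneg fun s _ =>
        mul_nonneg (mul_nonneg (hp0 i s) (hw0 s r)) (hout0 i s y b))
    · exact mul_nonneg (mul_nonneg (h1β i).le (hQ0 i r)) (by norm_num)
  have hNsum : ∀ i r y, N i r y true + N i r y false = p' i r := by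
    intro i r y
    simp only [hNdef, hp'def]
    have h : (∑ s, p i s * w s r * out i s y true) + (∑ s, p i s * w s r * out i s y false)
        = P1 i r := by
      rw [← Finset.sum_add_distrib]
      exact Finset.sum_congr rfl fun s _ => by
        rw [← mul_add, houtsum i s y, mul_one]
    rw [← h]
    ring
  refine ⟨p', out', ?_, ?_, ?_, ?_, ?_, ?_, ?_, ?_⟩
  · exact hp'0
  · intro i
    have hPsum : ∑ r, P1 i r = 1 := by
      simp only [hP1]; rw [Finset.sum_comm]
      have h : ∀ s : Finset (Fin m), ∑ r, p i s * w s r = p i s := by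
        intro s
        rw [← Finset.mul_sum, hw1 s, mul_one]
      rw [Finset.sum_congr rfl (fun s _ => h s), hp1 i]
    simp only [hp'def]
    rw [Finset.sum_add_distrib, ← Finset.mul_sum, ← Finset.mul_sum, hPsum, hQ1 i]
    ring
  · intro i r hr
    by_contra hcard
    apply hr
    have h1 : P1 i r = 0 := Finset.sum_eq_zero fun s _ => by
      by_cases hws : w s r = 0
      · rw [hws, mul_zero]
      · exact absurd (le_of_eq (hwcard s r hws)) hcard
    have h2 : Qw i r = 0 := by
      by_contra h
      exact hcard (le_of_eq (hQcard i r h))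
    simp only [hp'def]
    rw [h1, h2]
    ring
  · intro i j
    have hPm : ∑ r ∈ univ.filter (fun r => j ∈ r), P1 i r = S' i j := by
      simp only [hP1, hS']
      rw [Finset.sum_comm]
      refine Finset.sum_congr rfl fun s _ => ?_
      rw [← Finset.mul_sum]
      by_cases hps : p i s = 0
      · simp [hps]
      · rw [hwmarg s (hpq i s hps) j]
    have hQm := hQmarg i j
    have h1βi := h1β i
    simp only [hp'def]
    rw [Finset.sum_add_distrib, ← Finset.mul_sum, ← Finset.mul_sum, hPm, hQm]
    simp only [ht']
    rw [mul_comm ((1:ℝ)-β) _, div_mul_cancel₀ _ (ne_of_gt h1βi)]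
    ring
  · intro i r y b
    simp only [hout'def]
    split
    · norm_num
    · exact div_nonneg (hN0 i r y b) (hp'0 i r)
  · intro i r y
    simp only [hout'def]
    by_cases hz : p' i r = 0
    · rw [if_pos hz, if_pos hz]; norm_num
    · rw [if_neg hz, if_neg hz, ← add_div, hNsum i r y, div_self hz]
  · intro i r y y' hyy
    funext b
    simp only [hout'def]
    by_cases hz : p' i r = 0
    · rw [if_pos hz, if_pos hz]
    · rw [if_neg hz, if_neg hz]
      congr 1
      simp only [hNdef]
      congr 2
      refine Finset.sum_congr rfl fun s _ => ?_
      by_cases hps : p i s = 0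
      · simp [hps]
      · by_cases hws : w s r = 0
        · simp [hws]
        · have hsub := hwsub s r (hpq i s hps) hws
          have : out i s y = out i s y' :=
            hloc i s y y' (fun j hj => hyy j (hsub hj))
          rw [this]
  · intro x i
    obtain ⟨hεhalf, hεc⟩ := hkey i
    have h1βi := h1β i
    have hsumN : ∑ r, p' i r * out' i r (C x) (x i) = ∑ r, N i r (C x) (x i) := by
      refine Finset.sum_congr rfl fun r _ => ?_
      simp only [hout'def]
      by_cases hz : p' i r = 0
      · rw [if_pos hz, hz, zero_mul]
        have h1 := hN0 i r (C x) true
        have h2 := hN0 i r (C x) false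
        have h3 := hNsum i r (C x)
        rw [hz] at h3
        cases hxi : x i
        · linarith
        · linarith
      · rw [if_neg hz, mul_comm, div_mul_cancel₀ _ hz]
    rw [hsumN]
    have hexp : ∑ r, N i r (C x) (x i)
        = β * (∑ s, p i s * out i s (C x) (x i)) + (1-β) * (1/2) := by
      simp only [hNdef]
      rw [Finset.sum_add_distrib, ← Finset.mul_sum]
      congr 1
      · congr 1
        rw [Finset.sum_comm]
        refine Finset.sum_congr rfl fun s _ => ?_
        have hre : ∀ r' : Finset (Fin m), p i s * w s r' * out i s (C x) (x i)
            = p i s * out i s (C x) (x i) * w s r' := fun r' => by ring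
        rw [Finset.sum_congr rfl (fun r' _ => hre r'), ← Finset.mul_sum, hw1 s, mul_one]
      · rw [show (∑ r, (1-β) * Qw i r * (1/2)) = (1-β) * (∑ r, Qw i r) * (1/2) by
          rw [Finset.mul_sum, Finset.sum_mul]]
        rw [hQ1 i, mul_one]
    rw [hexp]
    have hSig := hsucc x i
    have halg : 1/2 + ε^2/(2*c) = β*(1/2+ε) + (1-β)*(1/2) := by
      rw [hβ]
      field_simp
      ring
    rw [halg]
    have : β * (1/2 + ε) ≤ β * (∑ s, p i s * out i s (C x) (x i)) :=
      mul_le_mul_of_nonneg_left hSig hβpos.le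
    linarith
end
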